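/- Let X, Y be n×n complex matrices with Re(X) and Re(Y) positive definite, where Re(M) = (M+M*)/2. Then there exists an invertible matrix T and a unitary U such that U*T* Re(X) T U and U*T* Re(Y) T U are diagonal matrices summing to I, and δ²(X,Y) := log(|det(X*+Y)| / (sqrt(det(X*+X)) sqrt(det(Y*+Y)))) decomposes as δ_S²(D_x, D_y) + (1/2) log det(I + (S_y - S_x)²), where D_x, D_y are the diagonal real parts and S_x, S_y the (Hermitian) transformed imaginary parts. -/

import Mathlib

set_option maxHeartbeats 1000000


open Matrix
open scoped ComplexOrder

/-- Hermitian real part `(M + Mᴴ)/2`. -/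
noncomputable def matRe {n : ℕ} (M : Matrix (Fin n) (Fin n) ℂ) : Matrix (Fin n) (Fin n) ℂ :=
  (1 / 2 : ℂ) • (M + Mᴴ)

/-- Hermitian imaginary part `(M - Mᴴ)/(2i)`. -/
noncomputable def matIm {n : ℕ} (M : Matrix (Fin n) (Fin n) ℂ) : Matrix (Fin n) (Fin n) ℂ :=
  (-(Complex.I) / 2) • (M - Mᴴ)

/-- `δ²(X,Y) = log(|det(X*+Y)| / (√det(X*+X) √det(Y*+Y)))`. -/
noncomputable def delta2 {n : ℕ} (X Y : Matrix (Fin n) (Fin n) ℂ) : ℝ :=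
  Real.log (‖Matrix.det (Xᴴ + Y)‖ /
    (Real.sqrt ((Matrix.det (Xᴴ + X)).re) * Real.sqrt ((Matrix.det (Yᴴ + Y)).re)))

/-- Squared S-divergence of positive vectors (diagonal positive matrices). -/
noncomputable def deltaS2vec {n : ℕ} (dx dy : Fin n → ℝ) : ℝ :=
  Real.log ((∏ i, ((dx i + dy i) / 2)) / Real.sqrt ((∏ i, dx i) * ∏ i, dy i))

lemma posDefConj {n : ℕ} {A B : Matrix (Fin n) (Fin n) ℂ} (hA : A.PosDef) (hB : IsUnit B) :
    (Bᴴ * A * B).PosDef := by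
  refine PosDef.of_dotProduct_mulVec_pos (Matrix.isHermitian_conjTranspose_mul_mul B hA.1) fun x hx => ?_
  have hinj := Matrix.mulVec_injective_iff_isUnit.mpr hB
  have hBx : B *ᵥ x ≠ 0 := fun h => hx (hinj (by rw [h, mulVec_zero]))
  simpa only [star_mulVec, dotProduct_mulVec, vecMul_vecMul] using hA.dotProduct_mulVec_pos hBx

lemma matImHerm {n : ℕ} (M : Matrix (Fin n) (Fin n) ℂ) : (matIm M).IsHermitian := by
  unfold Matrix.IsHermitian matIm
  rw [Matrix.conjTranspose_smul, Matrix.conjTranspose_sub, Matrix.conjTranspose_conjTranspose]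
  rw [show star (-(Complex.I)/2 : ℂ) = Complex.I/2 by simp [Complex.ext_iff]]
  rw [show Mᴴ - M = -(M - Mᴴ) by abel, smul_neg, ← neg_smul]
  congr 1
  ring

lemma smul_I_matIm {n : ℕ} (M : Matrix (Fin n) (Fin n) ℂ) :
    Complex.I • matIm M = (1 / 2 : ℂ) • (M - Mᴴ) := by
  rw [matIm, smul_smul]
  congr 1
  have := Complex.I_mul_I
  field_simp
  rw [Complex.I_sq]; ring

lemma idXY {n : ℕ} (X Y : Matrix (Fin n) (Fin n) ℂ) :
    Xᴴ + Y = (matRe X + matRe Y) + Complex.I • (matIm Y - matIm X) := by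
  rw [smul_sub, smul_I_matIm, smul_I_matIm, matRe, matRe]
  module

lemma idXX {n : ℕ} (X : Matrix (Fin n) (Fin n) ℂ) :
    Xᴴ + X = (2 : ℂ) • matRe X := by
  rw [matRe]
  module

lemma detCongr {n : ℕ} (V M : Matrix (Fin n) (Fin n) ℂ) :
    Matrix.det (Vᴴ * M * V) = (Complex.normSq (det V) : ℂ) * det M := by
  rw [Matrix.det_mul, Matrix.det_mul, Matrix.det_conjTranspose, Complex.star_def]
  rw [Complex.normSq_eq_conj_mul_self]
  ring

lemma detOnePlus {n : ℕ} (S : Matrix (Fin n) (Fin n) ℂ) (hS : S.IsHermitian) :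
    det (1 + Complex.I • S) * (starRingEnd ℂ) (det (1 + Complex.I • S)) = det (1 + S ^ 2) := by
  have hconj : (1 + Complex.I • S)ᴴ = 1 - Complex.I • S := by
    rw [Matrix.conjTranspose_add, Matrix.conjTranspose_smul, Matrix.conjTranspose_one, hS.eq]
    rw [Complex.star_def, Complex.conj_I, neg_smul]
    abel
  have h2 : (Complex.I • S) * (Complex.I • S) = -(S ^ 2) := by
    rw [Matrix.smul_mul, Matrix.mul_smul, smul_smul, Complex.I_mul_I, neg_one_smul, pow_two]
  have hmul : (1 + Complex.I • S) * (1 - Complex.I • S) = 1 + S ^ 2 := by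
    rw [Matrix.mul_sub, Matrix.add_mul, Matrix.add_mul, Matrix.one_mul, Matrix.mul_one, h2]
    simp only [Matrix.one_mul]
    abel
  rw [← Complex.star_def, ← Matrix.det_conjTranspose, hconj, ← Matrix.det_mul, hmul]

/-- Decomposition of `δ²` for matrices with positive definite real part:
after a congruence `T` and a unitary `U`, the real parts become diagonal matrices
summing to `I`, and `δ²(X,Y)` splits as an S-divergence term plus
`½ log det(I + (S_y - S_x)²)` for the transformed imaginary parts. -/
theorem delta2_decomposition {n : ℕ} (X Y : Matrix (Fin n) (Fin n) ℂ)
    (hX : (matRe X).PosDef) (hY : (matRe Y).PosDef) :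
    ∃ T : Matrix (Fin n) (Fin n) ℂ, IsUnit T ∧
    ∃ U : Matrix (Fin n) (Fin n) ℂ, U ∈ Matrix.unitaryGroup (Fin n) ℂ ∧ ∃ dx dy : Fin n → ℝ,
      Uᴴ * Tᴴ * matRe X * T * U =
        Matrix.diagonal (fun i => (dx i : ℂ)) ∧
      Uᴴ * Tᴴ * matRe Y * T * U =
        Matrix.diagonal (fun i => (dy i : ℂ)) ∧
      (∀ i, dx i + dy i = 1) ∧
      delta2 X Y = deltaS2vec dx dy +
        (1 / 2) * Real.log ((Matrix.det (1 +
          (Uᴴ * Tᴴ * matIm Y * T * U -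
           Uᴴ * Tᴴ * matIm X * T * U) ^ 2)).re) := by
  classical
  set A := matRe X with hA
  set B := matRe Y with hB
  have hABpd : (A + B).PosDef := hX.add hY
  open MatrixOrder in set R := CFC.sqrt (A + B) with hRdef
  open MatrixOrder in have hRhe : R.IsHermitian := (Matrix.nonneg_iff_posSemidef.mp (CFC.sqrt_nonneg (A + B))).1
  open MatrixOrder in have hRR : R * R = A + B := CFC.sqrt_mul_sqrt_self (A + B) (Matrix.nonneg_iff_posSemidef.mpr hABpd.posSemidef)
  have hRunit : IsUnit R := by
    rw [Matrix.isUnit_iff_isUnit_det]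
    have h1 : det R * det R = det (A + B) := by rw [← Matrix.det_mul, hRR]
    exact isUnit_of_mul_isUnit_left (h1 ▸ hABpd.det_pos.ne'.isUnit)
  set T := R⁻¹ with hTdef
  have hTunit : IsUnit T := Matrix.isUnit_nonsing_inv_iff.mpr hRunit
  have hTH : Tᴴ = T := by rw [hTdef, Matrix.conjTranspose_nonsing_inv, hRhe.eq]
  have hRdet : IsUnit R.det := (Matrix.isUnit_iff_isUnit_det R).mp hRunit
  have hTAB : Tᴴ * (A + B) * T = 1 := by
    rw [hTH, hTdef, ← hRR, ← Matrix.mul_assoc, Matrix.nonsing_inv_mul R hRdet,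
      Matrix.one_mul, Matrix.mul_nonsing_inv R hRdet]
  set E := Tᴴ * A * T with hEdef
  have hEpd : E.PosDef := posDefConj hX hTunit
  have hEhe : E.IsHermitian := hEpd.1
  set U := (Matrix.IsHermitian.eigenvectorUnitary hEhe : Matrix (Fin n) (Fin n) ℂ) with hUdef
  have hU : U ∈ Matrix.unitaryGroup (Fin n) ℂ := (Matrix.IsHermitian.eigenvectorUnitary hEhe).2
  have hUU : Uᴴ * U = 1 := by
    rw [← Matrix.star_eq_conjTranspose]
    exact Matrix.mem_unitaryGroup_iff'.mp hU
  have hUunit : IsUnit U :=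
    ⟨⟨U, Uᴴ, Matrix.mem_unitaryGroup_iff.mp hU, hUU⟩, rfl⟩
  set dx := hEhe.eigenvalues with hdx
  set dy : Fin n → ℝ := fun i => 1 - dx i with hdy
  have hspec : E = U * Matrix.diagonal (fun i => (dx i : ℂ)) * Uᴴ := by
    have := hEhe.spectral_theorem
    rw [Unitary.conjStarAlgAut_apply] at this
    rw [← Matrix.star_eq_conjTranspose]
    exact this
  have hDx : Uᴴ * E * U = Matrix.diagonal (fun i => (dx i : ℂ)) := by
    rw [hspec, ← Matrix.mul_assoc, ← Matrix.mul_assoc, hUU, Matrix.one_mul,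
      Matrix.mul_assoc, hUU, Matrix.mul_one]
  have hEB : Tᴴ * B * T = 1 - E := by
    have h : Tᴴ * (A + B) * T = E + Tᴴ * B * T := by
      rw [Matrix.mul_add, Matrix.add_mul, hEdef]
    rw [h] at hTAB
    linear_combination (norm := abel) hTAB
  have hDy : Uᴴ * (Tᴴ * B * T) * U = Matrix.diagonal (fun i => (dy i : ℂ)) := by
    rw [hEB, Matrix.mul_sub, Matrix.sub_mul, Matrix.mul_one, hUU, hDx, hdy,
      ← Matrix.diagonal_one, Matrix.diagonal_sub]
    congr 1 with i
    push_cast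
    ring
  -- the congruence matrix V
  set V := T * U with hVdef
  have hVunit : IsUnit V := hTunit.mul hUunit
  have hassoc : ∀ M : Matrix (Fin n) (Fin n) ℂ, Uᴴ * Tᴴ * M * T * U = Vᴴ * M * V := by
    intro M
    rw [hVdef, Matrix.conjTranspose_mul]
    simp only [Matrix.mul_assoc]
  have hVA : Vᴴ * A * V = Matrix.diagonal (fun i => (dx i : ℂ)) := by
    rw [← hassoc, ← hDx, hEdef]
    simp only [Matrix.mul_assoc]
  have hVB : Vᴴ * B * V = Matrix.diagonal (fun i => (dy i : ℂ)) := by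
    rw [← hassoc, ← hDy]
    simp only [Matrix.mul_assoc]
  -- positivity of dx, dy
  have hdxpos : ∀ i, 0 < dx i := by
    intro i
    have h1 := posDefConj hX hVunit
    rw [hVA] at h1
    have := (Matrix.posDef_diagonal_iff.mp h1) i
    exact_mod_cast this
  have hdypos : ∀ i, 0 < dy i := by
    intro i
    have h1 := posDefConj hY hVunit
    rw [hVB] at h1
    have := (Matrix.posDef_diagonal_iff.mp h1) i
    exact_mod_cast this
  have hsum : ∀ i, dx i + dy i = 1 := fun i => by rw [hdy]; ring
  refine ⟨T, hTunit, U, hU, dx, dy, by rw [hassoc]; exact hVA,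
    by rw [hassoc]; exact hVB, hsum, ?_⟩
  -- main equality
  rw [hassoc (matIm Y), hassoc (matIm X)]
  set S := Vᴴ * matIm Y * V - Vᴴ * matIm X * V with hSdef
  have hSy : (Vᴴ * matIm Y * V).IsHermitian :=
    Matrix.isHermitian_conjTranspose_mul_mul V (matImHerm Y)
  have hSx : (Vᴴ * matIm X * V).IsHermitian :=
    Matrix.isHermitian_conjTranspose_mul_mul V (matImHerm X)
  have hSherm : S.IsHermitian := hSy.sub hSx
  set z := det (1 + Complex.I • S) with hzdef
  set az := ‖z‖ with hazdef
  have hS2pd : (1 + S ^ 2).PosDef := by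
    refine Matrix.PosDef.add_posSemidef Matrix.PosDef.one ?_
    rw [pow_two]; nth_rewrite 1 [← hSherm.eq]
    exact Matrix.posSemidef_conjTranspose_mul_self S
  have hrepos : 0 < (det (1 + S ^ 2)).re := by
    have := hS2pd.det_pos
    rw [Complex.lt_def] at this
    simpa using this.1
  have hre : (det (1 + S ^ 2)).re = az ^ 2 := by
    rw [← detOnePlus S hSherm, ← hzdef, Complex.mul_conj, Complex.ofReal_re, ← Complex.sq_norm]
  have haz : 0 < az := by
    rw [hre] at hrepos
    have h0 : az ≠ 0 := by
      intro h
      rw [h] at hrepos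
      simp at hrepos
    exact (norm_nonneg z).lt_of_ne' h0
  -- determinant computations
  set d := det V with hddef
  have hdne : d ≠ 0 := ((Matrix.isUnit_iff_isUnit_det V).mp hVunit).ne_zero
  set nd := Complex.normSq d with hnddef
  have hnd : 0 < nd := Complex.normSq_pos.mpr hdne
  have hdiagsum : Matrix.diagonal (fun i => (dx i : ℂ)) + Matrix.diagonal (fun i => (dy i : ℂ))
      = 1 := by
    rw [Matrix.diagonal_add, ← Matrix.diagonal_one]
    congr 1
    funext i
    simp only [hdy]
    push_cast
    ring
  have hXYcong : Vᴴ * (Xᴴ + Y) * V = 1 + Complex.I • S := by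
    rw [idXY, ← hA, ← hB]
    simp only [Matrix.mul_add, Matrix.add_mul, Matrix.smul_mul, Matrix.mul_smul,
      Matrix.mul_sub, Matrix.sub_mul]
    rw [hVA, hVB, ← hSdef, hdiagsum]
  have hzeq : (nd : ℂ) * det (Xᴴ + Y) = z := by
    rw [hnddef, hddef, ← detCongr V, hXYcong]
  have habs : ‖det (Xᴴ + Y)‖ = az / nd := by
    have h := congrArg norm hzeq
    rw [norm_mul, Complex.norm_real, Real.norm_eq_abs, abs_of_pos hnd] at h
    rw [eq_div_iff hnd.ne', mul_comm]
    exact h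
  set px := ∏ i, (2 * dx i) with hpxdef
  set py := ∏ i, (2 * dy i) with hpydef
  have hpx : 0 < px := Finset.prod_pos fun i _ => by linarith [hdxpos i]
  have hpy : 0 < py := Finset.prod_pos fun i _ => by linarith [hdypos i]
  have hXXcong : Vᴴ * (Xᴴ + X) * V = Matrix.diagonal (fun i => ((2 * dx i : ℝ) : ℂ)) := by
    rw [idXX, ← hA, Matrix.mul_smul, Matrix.smul_mul, hVA]
    rw [show (fun i => ((2 * dx i : ℝ) : ℂ)) = (2 : ℂ) • fun i => (dx i : ℂ) by
      funext i; push_cast; simp [Pi.smul_apply]]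
    rw [Matrix.diagonal_smul]
  have hYYcong : Vᴴ * (Yᴴ + Y) * V = Matrix.diagonal (fun i => ((2 * dy i : ℝ) : ℂ)) := by
    rw [idXX, ← hB, Matrix.mul_smul, Matrix.smul_mul, hVB]
    rw [show (fun i => ((2 * dy i : ℝ) : ℂ)) = (2 : ℂ) • fun i => (dy i : ℂ) by
      funext i; push_cast; simp [Pi.smul_apply]]
    rw [Matrix.diagonal_smul]
  have hreXX : (det (Xᴴ + X)).re = px / nd := by
    have h1 : (nd : ℂ) * det (Xᴴ + X) = ((px : ℝ) : ℂ) := by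
      rw [hnddef, hddef, ← detCongr V, hXXcong, Matrix.det_diagonal, hpxdef]
      push_cast
      ring
    have h2 : det (Xᴴ + X) = ((px / nd : ℝ) : ℂ) := by
      rw [Complex.ofReal_div, eq_div_iff (Complex.ofReal_ne_zero.mpr hnd.ne')]
      linear_combination h1
    rw [h2, Complex.ofReal_re]
  have hreYY : (det (Yᴴ + Y)).re = py / nd := by
    have h1 : (nd : ℂ) * det (Yᴴ + Y) = ((py : ℝ) : ℂ) := by
      rw [hnddef, hddef, ← detCongr V, hYYcong, Matrix.det_diagonal, hpydef]
      push_cast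
      ring
    have h2 : det (Yᴴ + Y) = ((py / nd : ℝ) : ℂ) := by
      rw [Complex.ofReal_div, eq_div_iff (Complex.ofReal_ne_zero.mpr hnd.ne')]
      linear_combination h1
    rw [h2, Complex.ofReal_re]
  -- final arithmetic
  set q := (∏ i, dx i) * ∏ i, dy i with hqdef
  have hq : 0 < q := mul_pos (Finset.prod_pos fun i _ => hdxpos i)
    (Finset.prod_pos fun i _ => hdypos i)
  have hsq : 0 < Real.sqrt q := Real.sqrt_pos.mpr hq
  have hprodhalf : (∏ i, ((dx i + dy i) / 2)) = (1 / 2 : ℝ) ^ n := by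
    rw [Finset.prod_congr rfl fun i _ => by rw [hsum i]]
    simp
  have hpxpy : px * py = ((2 : ℝ) ^ n) ^ 2 * q := by
    simp only [hpxdef, hpydef, hqdef, Finset.prod_mul_distrib, Finset.prod_const,
      Finset.card_univ, Fintype.card_fin]
    ring
  have hsqrts : Real.sqrt px * Real.sqrt py = 2 ^ n * Real.sqrt q := by
    rw [← Real.sqrt_mul hpx.le, hpxpy, Real.sqrt_mul (by positivity),
      Real.sqrt_sq (by positivity)]
  have hlogaz : (1 / 2 : ℝ) * Real.log (az ^ 2) = Real.log az := by
    rw [Real.log_pow]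
    push_cast
    ring
  rw [delta2, deltaS2vec, habs, hreXX, hreYY, hre, hprodhalf, hlogaz]
  rw [show Real.sqrt ((∏ i, dx i) * ∏ i, dy i) = Real.sqrt q from rfl]
  rw [← Real.log_mul (by positivity) haz.ne']
  congr 1
  have key : az / nd / (Real.sqrt (px / nd) * Real.sqrt (py / nd)) = az / (2 ^ n * Real.sqrt q) := by
    rw [Real.sqrt_div hpx.le, Real.sqrt_div hpy.le, div_mul_div_comm,
      Real.mul_self_sqrt hnd.le, hsqrts]
    rw [div_div_div_cancel_right₀]
    exact hnd.ne'
  rw [key, _root_.one_div_pow]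
  field_simp
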